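/- Let H : ℝ → ℝ be continuous and coercive and F0 : ℝ → ℝ be continuous, non-increasing and semi-coercive. Then for every p ∈ ℝ there exists q ∈ ℝ such that F0(q) = G(q,p); moreover the common value is independent of q: if F0(q₁) = G(q₁,p) and F0(q₂) = G(q₂,p), then F0(q₁) = F0(q₂). -/

import Mathlib

open Set Filter

attribute [local instance] Classical.propDecidable

noncomputable section

/-- `H` is coercive: `H p → +∞` as `|p| → +∞`. -/
def Coercive (H : ℝ → ℝ) : Prop := Tendsto H (cocompact ℝ) atTop

/-- `F` is semi-coercive: `F p → +∞` as `p → -∞`. -/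
def SemiCoercive (F : ℝ → ℝ) : Prop := Tendsto F atBot atTop

/-- Sub-relaxation: `(R̲F)(p) = sup_{q ≥ p} min (F q) (H q)`. -/
def subR (H F : ℝ → ℝ) (p : ℝ) : ℝ := sSup ((fun q => min (F q) (H q)) '' Ici p)

/-- Super-relaxation: `(R̄F)(p) = inf_{q ≤ p} max (F q) (H q)`. -/
def supR (H F : ℝ → ℝ) (p : ℝ) : ℝ := sInf ((fun q => max (F q) (H q)) '' Iic p)

/-- Relaxation operator: `R̲F` where `F ≥ H`, `R̄F` where `F ≤ H`. -/
def relax (H F : ℝ → ℝ) (p : ℝ) : ℝ := if H p ≤ F p then subR H F p else supR H F p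

/-- `p` is a negative characteristic point of `F` relative to `H`. -/
def negChar (H F : ℝ → ℝ) (p : ℝ) : Prop :=
  H p = F p ∧ ∃ ε > 0, ∀ q ∈ Ioo (p - ε) p, H q < H p

/-- `p` is a positive characteristic point of `F` relative to `H`. -/
def posChar (H F : ℝ → ℝ) (p : ℝ) : Prop :=
  H p = F p ∧ ∃ ε > 0, ∀ q ∈ Ioo p (p + ε), H p < H q

/-- The upper point `p⁺ ∈ ℝ ∪ {+∞}` associated with `p` and `H`. -/
def upperPt (H : ℝ → ℝ) (p : ℝ) : EReal :=
  if ∀ ε > 0, ∃ q, p < q ∧ q < p + ε ∧ H q ≤ H p then (p : EReal)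
  else sSup ((fun q : ℝ => (q : EReal)) '' {q : ℝ | p < q ∧ ∀ r ∈ Ioo p q, H p < H r})

/-- The lower point `p⁻` associated with `p` and `H`. -/
def lowerPt (H : ℝ → ℝ) (p : ℝ) : ℝ :=
  if ∀ ε > 0, ∃ q, p - ε < q ∧ q < p ∧ H p ≤ H q then p
  else sInf {q : ℝ | q < p ∧ ∀ r ∈ Ioo q p, H r < H p}

/-- `p` is a positive limiter point of `F`. -/
def posLimiter (H F : ℝ → ℝ) (p : ℝ) : Prop :=
  (p : EReal) < upperPt H p ∧ F p ≤ H p ∧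
    ∀ q : ℝ, H q < H p → F q ≤ H q →
      {r : ℝ | lowerPt H q < r ∧ (r : EReal) < upperPt H q} ∩
        {r : ℝ | p < r ∧ (r : EReal) < upperPt H p} = ∅

/-- `p` is a negative limiter point of `F`. -/
def negLimiter (H F : ℝ → ℝ) (p : ℝ) : Prop :=
  lowerPt H p < p ∧ H p ≤ F p ∧
    ∀ q : ℝ, H q ≤ F q → H p < H q →
      {r : ℝ | lowerPt H q < r ∧ (r : EReal) < upperPt H q} ∩ Ioo (lowerPt H p) p = ∅

/-- The Godunov flux associated with `H`. -/
def godunov (H : ℝ → ℝ) (q p : ℝ) : ℝ :=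
  if p ≤ q then sSup (H '' Icc p q) else sInf (H '' Icc q p)

/-- The lower (set-valued) Godunov semi-flux `G̲(q,p)`, as a subset of the extended reals. -/
def subG (H : ℝ → ℝ) (q p : ℝ) : Set EReal :=
  if q < p then {⊥}
  else if q = p then Iic ((H p : ℝ) : EReal)
  else {((godunov H q p : ℝ) : EReal)}

/-- The upper (set-valued) Godunov semi-flux `Ḡ(q,p)`, as a subset of the extended reals. -/
def supG (H : ℝ → ℝ) (q p : ℝ) : Set EReal :=
  if q < p then {((godunov H q p : ℝ) : EReal)}
  else if q = p then Ici ((H p : ℝ) : EReal)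
  else {⊤}


private lemma img_ne {H : ℝ → ℝ} {a b : ℝ} (hab : a ≤ b) : (H '' Icc a b).Nonempty :=
  (nonempty_Icc.2 hab).image H

private lemma godunov_eq_sSup {H : ℝ → ℝ} {p q : ℝ} (h : p ≤ q) :
    godunov H q p = sSup (H '' Icc p q) := if_pos h

private lemma godunov_eq_sInf {H : ℝ → ℝ} {p q : ℝ} (h : q ≤ p) :
    godunov H q p = sInf (H '' Icc q p) := by
  rcases eq_or_lt_of_le h with rfl | hlt
  · simp [godunov, Icc_self]
  · exact if_neg (not_le.2 hlt)

private lemma le_sSup_image {H : ℝ → ℝ} (hH : Continuous H) {a b r : ℝ} (hr : r ∈ Icc a b) :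
    H r ≤ sSup (H '' Icc a b) :=
  le_csSup (isCompact_Icc.image hH).bddAbove ⟨r, hr, rfl⟩

private lemma csInf_image_le {H : ℝ → ℝ} (hH : Continuous H) {a b r : ℝ} (hr : r ∈ Icc a b) :
    sInf (H '' Icc a b) ≤ H r :=
  csInf_le (isCompact_Icc.image hH).bddBelow ⟨r, hr, rfl⟩

private lemma csSup_image_le {H : ℝ → ℝ} {a b c : ℝ} (hab : a ≤ b)
    (h : ∀ r ∈ Icc a b, H r ≤ c) : sSup (H '' Icc a b) ≤ c :=
  csSup_le (img_ne hab) (by rintro x ⟨r, hr, rfl⟩; exact h r hr)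

private lemma le_csInf_image {H : ℝ → ℝ} {a b c : ℝ} (hab : a ≤ b)
    (h : ∀ r ∈ Icc a b, c ≤ H r) : c ≤ sInf (H '' Icc a b) :=
  le_csInf (img_ne hab) (by rintro x ⟨r, hr, rfl⟩; exact h r hr)

private lemma godunov_mono {H : ℝ → ℝ} (hH : Continuous H) (p : ℝ) {q₁ q₂ : ℝ} (h : q₁ ≤ q₂) :
    godunov H q₁ p ≤ godunov H q₂ p := by
  rcases le_total p q₁ with h1 | h1
  · rw [godunov_eq_sSup h1, godunov_eq_sSup (h1.trans h)]
    exact csSup_le_csSup (isCompact_Icc.image hH).bddAbove (img_ne h1)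
      (image_mono (Icc_subset_Icc_right h))
  · rw [godunov_eq_sInf h1]
    rcases le_total p q₂ with h2 | h2
    · rw [godunov_eq_sSup h2]
      exact le_trans (csInf_image_le hH ⟨h1, le_rfl⟩) (le_sSup_image hH ⟨le_rfl, h2⟩)
    · rw [godunov_eq_sInf h2]
      exact csInf_le_csInf (isCompact_Icc.image hH).bddBelow (img_ne h2)
        (image_mono (Icc_subset_Icc_left h))

private lemma exists_sol_right (H F0 : ℝ → ℝ) (hH : Continuous H) (hHc : Coercive H)
    (hF : Continuous F0) (hFa : Antitone F0) (p : ℝ) (hcase : H p ≤ F0 p) :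
    ∃ q : ℝ, F0 q = godunov H q p := by
  set M : ℝ → ℝ := fun q => sSup (H '' Icc p q) with hM
  set T : Set ℝ := {q : ℝ | p ≤ q ∧ M q ≤ F0 q} with hT
  have hMp : M p = H p := by simp [hM, Icc_self]
  have hpT : p ∈ T := ⟨le_rfl, by rw [hMp]; exact hcase⟩
  have hHtop : Tendsto H atTop atTop :=
    hHc.mono_left (by rw [cocompact_eq_atBot_atTop]; exact le_sup_right)
  obtain ⟨B, hB⟩ := (hHtop.eventually_gt_atTop (F0 p)).exists_forall_of_atTop
  have hbdd : BddAbove T := by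
    refine ⟨max B p, fun q hq => ?_⟩
    by_contra hc
    push_neg at hc
    have hqB : B ≤ q := (le_max_left B p).trans hc.le
    have h1 : F0 p < H q := hB q hqB
    have h2 : H q ≤ M q := le_sSup_image hH ⟨hq.1, le_rfl⟩
    have h3 : F0 q ≤ F0 p := hFa hq.1
    linarith [hq.2]
  set Q : ℝ := sSup T with hQ
  have hpQ : p ≤ Q := le_csSup hbdd hpT
  have key : F0 Q = M Q := by
    have cont : ∀ ε > (0:ℝ), ∃ δ > (0:ℝ), ∀ r : ℝ, |r - Q| < δ →
        |H r - H Q| < ε ∧ |F0 r - F0 Q| < ε := by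
      intro ε hε
      obtain ⟨δ₁, hδ₁, h1⟩ := Metric.continuous_iff.1 hH Q ε hε
      obtain ⟨δ₂, hδ₂, h2⟩ := Metric.continuous_iff.1 hF Q ε hε
      refine ⟨min δ₁ δ₂, lt_min hδ₁ hδ₂, fun r hr => ?_⟩
      simp only [Real.dist_eq] at h1 h2
      exact ⟨h1 r (lt_of_lt_of_le hr (min_le_left _ _)), h2 r (lt_of_lt_of_le hr (min_le_right _ _))⟩
    refine le_antisymm ?_ ?_
    · refine le_of_forall_pos_le_add fun ε hε => ?_
      obtain ⟨δ, hδ, hcd⟩ := cont (ε/3) (by linarith)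
      set q : ℝ := Q + δ/2 with hq
      have hQq : Q < q := by simp [hq]; linarith
      have hqT : q ∉ T := fun h => absurd (le_csSup hbdd h) (not_le.2 hQq)
      have hFM : F0 q < M q := by
        by_contra hc
        exact hqT ⟨hpQ.trans hQq.le, not_lt.1 hc⟩
      have hMq : M q ≤ M Q + ε/3 := by
        refine csSup_image_le (hpQ.trans hQq.le) fun r hr => ?_
        rcases le_total r Q with h | h
        · exact (le_sSup_image hH ⟨hr.1, h⟩).trans (by linarith)
        · have : |r - Q| < δ := by
            rw [abs_lt]; constructor <;> [linarith; (have := hr.2; rw [hq] at this; linarith)]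
          have h1 := (abs_lt.1 (hcd r this).1).2
          have h2 : H Q ≤ M Q := le_sSup_image hH ⟨hpQ, le_rfl⟩
          linarith
      have hFq : F0 Q ≤ F0 q + ε/3 := by
        have : |q - Q| < δ := by rw [hq]; simp [abs_of_pos]; linarith [abs_of_pos (by linarith : (0:ℝ) < δ/2)]
        have := (abs_lt.1 (hcd q this).2).1
        linarith
      linarith
    · refine le_of_forall_pos_le_add fun ε hε => ?_
      obtain ⟨δ, hδ, hcd⟩ := cont (ε/3) (by linarith)
      obtain ⟨q, hqT, hqlt⟩ := exists_lt_of_lt_csSup ⟨p, hpT⟩ (by linarith : Q - δ/2 < Q)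
      have hqQ : q ≤ Q := le_csSup hbdd hqT
      have habs : |q - Q| < δ := by rw [abs_lt]; constructor <;> linarith
      have hFqQ : F0 q ≤ F0 Q + ε/3 := by
        have := (abs_lt.1 (hcd q habs).2).2; linarith
      have hHQ : H Q ≤ F0 Q + 2*(ε/3) := by
        have h1 := (abs_lt.1 (hcd q habs).1).1
        have h2 : H q ≤ M q := le_sSup_image hH ⟨hqT.1, le_rfl⟩
        linarith [hqT.2]
      refine csSup_image_le hpQ fun r hr => ?_
      rcases le_total r q with h | h
      · have : H r ≤ M q := le_sSup_image hH ⟨hr.1, h⟩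
        linarith [hqT.2]
      · have : |r - Q| < δ := by rw [abs_lt]; constructor <;> linarith [hr.2]
        have := (abs_lt.1 (hcd r this).1).2
        linarith
  exact ⟨Q, by rw [godunov_eq_sSup hpQ]; exact key⟩

private lemma exists_sol_left (H F0 : ℝ → ℝ) (hH : Continuous H)
    (hF : Continuous F0) (hFa : Antitone F0) (hFs : SemiCoercive F0) (p : ℝ)
    (hcase : F0 p ≤ H p) :
    ∃ q : ℝ, F0 q = godunov H q p := by
  set m : ℝ → ℝ := fun q => sInf (H '' Icc q p) with hm
  set S : Set ℝ := {q : ℝ | q ≤ p ∧ m q ≤ F0 q} with hS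
  obtain ⟨A, hA⟩ := (hFs.eventually_gt_atTop (H p)).exists_forall_of_atBot
  have hq₀S : min A p ∈ S := by
    refine ⟨min_le_right A p, ?_⟩
    have h1 : m (min A p) ≤ H p := csInf_image_le hH ⟨min_le_right A p, le_rfl⟩
    have h2 : H p < F0 (min A p) := hA _ (min_le_left A p)
    linarith
  have hbdd : BddAbove S := ⟨p, fun q hq => hq.1⟩
  set Q : ℝ := sSup S with hQ
  have hQp : Q ≤ p := csSup_le ⟨_, hq₀S⟩ fun q hq => hq.1
  have cont : ∀ ε > (0:ℝ), ∃ δ > (0:ℝ), ∀ r : ℝ, |r - Q| < δ →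
      |H r - H Q| < ε ∧ |F0 r - F0 Q| < ε := by
    intro ε hε
    obtain ⟨δ₁, hδ₁, h1⟩ := Metric.continuous_iff.1 hH Q ε hε
    obtain ⟨δ₂, hδ₂, h2⟩ := Metric.continuous_iff.1 hF Q ε hε
    simp only [Real.dist_eq] at h1 h2
    exact ⟨min δ₁ δ₂, lt_min hδ₁ hδ₂, fun r hr =>
      ⟨h1 r (lt_of_lt_of_le hr (min_le_left _ _)), h2 r (lt_of_lt_of_le hr (min_le_right _ _))⟩⟩
  have key : F0 Q = m Q := by
    have hHQm : m Q ≤ H Q := csInf_image_le hH ⟨le_rfl, hQp⟩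
    refine le_antisymm ?_ ?_
    · rcases eq_or_lt_of_le hQp with heq | hlt
      · have : m Q = H Q := by rw [hm, heq]; simp [Icc_self]
        rw [this, heq]; exact hcase
      refine le_of_forall_pos_le_add fun ε hε => ?_
      obtain ⟨δ, hδ, hcd⟩ := cont (ε/3) (by linarith)
      set q : ℝ := min (Q + δ/2) ((Q + p)/2) with hq
      have hQq : Q < q := lt_min (by linarith) (by linarith)
      have hqp : q ≤ p := (min_le_right _ _).trans (by linarith)
      have habs : |q - Q| < δ := by
        rw [abs_lt]
        exact ⟨by linarith, by have := min_le_left (Q + δ/2) ((Q + p)/2); rw [← hq] at this; linarith⟩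
      have hqS : q ∉ S := fun h => absurd (le_csSup hbdd h) (not_le.2 hQq)
      have hFm : F0 q < m q := by
        by_contra hc; exact hqS ⟨hqp, not_lt.1 hc⟩
      have hFq : F0 Q ≤ F0 q + ε/3 := by
        have := (abs_lt.1 (hcd q habs).2).1; linarith
      have hmQ : F0 Q - ε ≤ m Q := by
        refine le_csInf_image hQp fun r hr => ?_
        rcases le_total q r with h | h
        · have : m q ≤ H r := csInf_image_le hH ⟨h, hr.2⟩
          linarith
        · have habr : |r - Q| < δ := by
            rw [abs_lt]
            constructor
            · linarith [hr.1]
            · have h2 := min_le_left (Q + δ/2) ((Q + p)/2); rw [← hq] at h2; linarith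
          have h3 := (abs_lt.1 (hcd r habr).1).1
          have h4 := (abs_lt.1 (hcd q habs).1).2
          have h5 : m q ≤ H q := csInf_image_le hH ⟨le_rfl, hqp⟩
          linarith
      linarith
    · refine le_of_forall_pos_le_add fun ε hε => ?_
      obtain ⟨δ, hδ, hcd⟩ := cont (ε/3) (by linarith)
      obtain ⟨q, hqS', hqlt⟩ := exists_lt_of_lt_csSup ⟨_, hq₀S⟩ (by linarith : Q - δ/2 < Q)
      have hqQ : q ≤ Q := le_csSup hbdd hqS'
      have habs : |q - Q| < δ := by rw [abs_lt]; constructor <;> linarith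
      have hmq : m Q - ε/3 ≤ m q := by
        refine le_csInf_image hqS'.1 fun r hr => ?_
        rcases le_total Q r with h | h
        · have : m Q ≤ H r := csInf_image_le hH ⟨h, hr.2⟩; linarith
        · have habr : |r - Q| < δ := by rw [abs_lt]; constructor <;> linarith [hr.1]
          have h3 := (abs_lt.1 (hcd r habr).1).1
          linarith
      have hFq : F0 q ≤ F0 Q + ε/3 := by
        have := (abs_lt.1 (hcd q habs).2).2; linarith
      linarith [hqS'.2]
  exact ⟨Q, by rw [godunov_eq_sInf hQp]; exact key⟩

/-- Godunov's operator is well defined: existence and uniqueness of the common value. -/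
theorem godunov_action_well_defined (H F0 : ℝ → ℝ)
    (hH : Continuous H) (hHc : Coercive H)
    (hF : Continuous F0) (hFa : Antitone F0) (hFs : SemiCoercive F0) (p : ℝ) :
    (∃ q : ℝ, F0 q = godunov H q p) ∧
    (∀ q₁ q₂ : ℝ, F0 q₁ = godunov H q₁ p → F0 q₂ = godunov H q₂ p → F0 q₁ = F0 q₂) := by
  constructor
  · rcases le_total (H p) (F0 p) with h | h
    · exact exists_sol_right H F0 hH hHc hF hFa p h
    · exact exists_sol_left H F0 hH hF hFa hFs p h
  · intro q₁ q₂ h1 h2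
    rcases le_total q₁ q₂ with h | h
    · refine le_antisymm ?_ (hFa h)
      rw [h1, h2]; exact godunov_mono hH p h
    · refine le_antisymm (hFa h) ?_
      rw [h1, h2]; exact godunov_mono hH p h
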